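/- Let p be a prime and Λ a full-rank ℤ_p-lattice in ℚ_p^n with basis matrix B whose columns form an M-orthogonal basis of Λ, where M is the maximum norm. Let D = (B⁻¹)ᵀ, so the columns of D form the dual basis. Then the columns of D form an M-orthogonal basis of the dual lattice Λ*. -/

import Mathlib

open scoped BigOperators
open Matrix

/-- The `i`-th successive maximum of a set `Λ ⊆ ℚ_p^n` with respect to a norm `N`:
the largest `r` such that `Λ` contains `i` linearly independent vectors of `N`-norm `≥ r`. -/
noncomputable def succMax (p : ℕ) [Fact p.Prime] (n : ℕ)
    (N : (Fin n → ℚ_[p]) → ℝ) (Λ : Set (Fin n → ℚ_[p])) (i : ℕ) : ℝ :=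
  sSup {r : ℝ | ∃ s : Fin i → (Fin n → ℚ_[p]),
    (∀ k, s k ∈ Λ) ∧ LinearIndependent ℚ_[p] s ∧ ∀ k, r ≤ N (s k)}

/-- The `ℤ_p`-lattice spanned by the vectors `b`. -/
def latticeSet (p : ℕ) [Fact p.Prime] {n m : ℕ} (b : Fin m → (Fin n → ℚ_[p])) :
    Set (Fin n → ℚ_[p]) :=
  {x | ∃ c : Fin m → ℤ_[p], x = ∑ j, (c j : ℚ_[p]) • b j}

/-- The dual lattice of `Λ` w.r.t. the standard bilinear pairing `⟨x,y⟩ = ∑ x j * y j`. -/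
def dualSet (p : ℕ) [Fact p.Prime] {n : ℕ} (Λ : Set (Fin n → ℚ_[p])) :
    Set (Fin n → ℚ_[p]) :=
  {y | ∀ x ∈ Λ, ∃ z : ℤ_[p], (z : ℚ_[p]) = ∑ j, x j * y j}

/-- A family `b` is `N`-orthogonal if `N (∑ cᵢ bᵢ) = maxᵢ N (cᵢ bᵢ)` for all scalars. -/
def IsOrthogonal (p : ℕ) [Fact p.Prime] {n m : ℕ}
    (N : (Fin n → ℚ_[p]) → ℝ) (b : Fin m → (Fin n → ℚ_[p])) : Prop :=
  ∀ c : Fin m → ℚ_[p], N (∑ i, c i • b i) = ⨆ i, N (c i • b i)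

section aux

variable {p : ℕ} [Fact p.Prime] {n : ℕ}

lemma aux_pair (B : Matrix (Fin n) (Fin n) ℚ_[p]) (hB : IsUnit B.det) (i j : Fin n) :
    ∑ r, B r i * (B⁻¹)ᵀ r j = if j = i then 1 else 0 := by
  have : ∑ r, B r i * (B⁻¹)ᵀ r j = (B⁻¹ * B) j i := by
    simp [Matrix.mul_apply, Matrix.transpose_apply, mul_comm]
  rw [this, Matrix.nonsing_inv_mul B hB, Matrix.one_apply]

lemma aux_pair_sums (B : Matrix (Fin n) (Fin n) ℚ_[p]) (hB : IsUnit B.det)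
    (u v : Fin n → ℚ_[p]) :
    ∑ j, (∑ i, u i * B j i) * (∑ k, v k * (B⁻¹)ᵀ j k) = ∑ i, u i * v i := by
  simp only [Finset.sum_mul, Finset.mul_sum]
  rw [Finset.sum_comm]
  refine Finset.sum_congr rfl fun i _ => ?_
  rw [Finset.sum_comm]
  have h1 : ∀ b', ∑ x, u b' * B x b' * (v i * (B⁻¹)ᵀ x i)
      = u b' * v i * ∑ x, B x b' * (B⁻¹)ᵀ x i := fun b' => by
    rw [Finset.mul_sum]
    exact Finset.sum_congr rfl fun x _ => by ring
  simp only [h1, aux_pair B hB]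
  simp

lemma aux_span (B : Matrix (Fin n) (Fin n) ℚ_[p]) (hB : IsUnit B.det)
    (y : Fin n → ℚ_[p]) :
    y = ∑ j, (∑ r, B r j * y r) • (fun r => (B⁻¹)ᵀ r j) := by
  funext r'
  simp only [Finset.sum_apply, Pi.smul_apply, smul_eq_mul]
  have h1 : ∀ j, (∑ r, B r j * y r) * (B⁻¹)ᵀ r' j
      = ∑ r, (B r j * (B⁻¹)ᵀ r' j) * y r := by
    intro j
    rw [Finset.sum_mul]
    exact Finset.sum_congr rfl fun r _ => by ring
  simp only [h1]
  rw [Finset.sum_comm]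
  have h2 : ∀ r, ∑ j, B r j * (B⁻¹)ᵀ r' j * y r
      = (if r = r' then 1 else 0) * y r := by
    intro r
    rw [← Finset.sum_mul]
    have h3 : ∑ j, B r j * (B⁻¹)ᵀ r' j = (B * B⁻¹) r r' := by
      simp [Matrix.mul_apply, Matrix.transpose_apply]
    rw [h3, Matrix.mul_nonsing_inv B hB, Matrix.one_apply]
  simp only [h2]
  simp

end aux

/-- the dual basis of an `M`-orthogonal basis is an `M`-orthogonal
basis of the dual lattice (for the maximum norm `M`). -/
theorem stmt11 {p : ℕ} [Fact p.Prime] {n : ℕ} (B : Matrix (Fin n) (Fin n) ℚ_[p])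
    (hB : IsUnit B.det)
    (horth : IsOrthogonal p (fun v => ‖v‖) (fun j => fun r => B r j)) :
    IsOrthogonal p (fun v => ‖v‖) (fun j => fun r => (B⁻¹)ᵀ r j) ∧
    latticeSet p (fun j => fun r => (B⁻¹)ᵀ r j)
      = dualSet p (latticeSet p (fun j => fun r => B r j)) := by
  classical
  set b : Fin n → Fin n → ℚ_[p] := fun j r => B r j with hbdef
  set d : Fin n → Fin n → ℚ_[p] := fun j r => (B⁻¹)ᵀ r j with hddef
  -- columns of B are nonzero
  have hbne : ∀ k, b k ≠ 0 := by
    intro k hk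
    have : B.det = 0 := Matrix.det_eq_zero_of_column_eq_zero k (fun r => congrFun hk r)
    exact hB.ne_zero this
  have hbpos : ∀ k, (0:ℝ) < ‖b k‖ := fun k => norm_pos_iff.mpr (hbne k)
  -- entries of the dual basis are bounded: ‖B⁻¹ k r‖ * ‖b k‖ ≤ 1
  have hentry : ∀ k r, ‖(B⁻¹)ᵀ r k‖ * ‖b k‖ ≤ 1 := by
    intro k r
    have hsingle : (∑ j, (B⁻¹ j r) • b j) = Pi.single r (1:ℚ_[p]) := by
      funext r'
      simp only [Finset.sum_apply, Pi.smul_apply, smul_eq_mul, hbdef]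
      have : ∑ j, B⁻¹ j r * B r' j = (B * B⁻¹) r' r := by
        simp [Matrix.mul_apply, mul_comm]
      rw [this, Matrix.mul_nonsing_inv B hB, Matrix.one_apply, Pi.single_apply]
    have h1 : ‖∑ i, B⁻¹ i r • b i‖ = ⨆ i, ‖B⁻¹ i r • b i‖ := horth (fun j => B⁻¹ j r)
    rw [hsingle] at h1
    have hnorm1 : ‖(Pi.single r (1:ℚ_[p]) : Fin n → ℚ_[p])‖ = 1 := by
      rw [Pi.norm_single]; simp
    have h2 : ‖(B⁻¹ k r) • b k‖ ≤ ⨆ j, ‖(B⁻¹ j r) • b j‖ :=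
      le_ciSup (f := fun j => ‖(B⁻¹ j r) • b j‖) (Finite.bddAbove_range _) k
    rw [← h1, hnorm1] at h2
    simpa [norm_smul, Matrix.transpose_apply] using h2
  -- norm bound on dual basis vectors
  have hdnorm : ∀ k, ‖d k‖ * ‖b k‖ ≤ 1 := by
    intro k
    have hle : ‖d k‖ ≤ 1 / ‖b k‖ := by
      refine (pi_norm_le_iff_of_nonneg (by positivity)).mpr fun r => ?_
      rw [le_div_iff₀ (hbpos k)]
      exact hentry k r
    calc ‖d k‖ * ‖b k‖ ≤ (1 / ‖b k‖) * ‖b k‖ :=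
          mul_le_mul_of_nonneg_right hle (norm_nonneg _)
      _ = 1 := by rw [one_div, inv_mul_cancel₀ (ne_of_gt (hbpos k))]
  -- evaluation of the pairing against the expansion in the dual basis
  have heval : ∀ (e : Fin n → ℚ_[p]) (k : Fin n),
      ∑ r, B r k * (∑ j, e j • d j) r = e k := by
    intro e k
    simp only [Finset.sum_apply, Pi.smul_apply, smul_eq_mul]
    have h1 : ∀ r, B r k * ∑ j, e j * d j r = ∑ j, e j * (B r k * d j r) := by
      intro r; rw [Finset.mul_sum]; exact Finset.sum_congr rfl fun j _ => by ring
    simp only [h1]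
    rw [Finset.sum_comm]
    have h2 : ∀ j, ∑ r, e j * (B r k * d j r) = e j * (if j = k then 1 else 0) := by
      intro j
      rw [← Finset.mul_sum]
      congr 1
      exact aux_pair B hB k j
    simp only [h2]
    simp
  -- pairing norm bound
  have hpairbound : ∀ (k : Fin n) (y : Fin n → ℚ_[p]),
      ‖∑ r, B r k * y r‖ ≤ ‖b k‖ * ‖y‖ := by
    intro k y
    refine IsUltrametricDist.norm_sum_le_of_forall_le_of_nonneg
      (by positivity) fun r _ => ?_
    rw [norm_mul]
    exact mul_le_mul (norm_le_pi_norm (b k) r) (norm_le_pi_norm y r)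
      (norm_nonneg _) (norm_nonneg _)
  constructor
  · -- orthogonality of the dual basis
    intro e
    show ‖∑ i, e i • d i‖ = ⨆ i, ‖e i • d i‖
    rcases isEmpty_or_nonempty (Fin n) with hempty | hne
    · simp [Real.iSup_of_isEmpty]
    · refine le_antisymm ?_ ?_
      · -- ultrametric upper bound
        set S := ⨆ j, ‖e j • d j‖ with hS
        have hS0 : 0 ≤ S := Real.iSup_nonneg fun j => norm_nonneg _
        refine (pi_norm_le_iff_of_nonneg hS0).mpr fun r => ?_
        simp only [Finset.sum_apply, Pi.smul_apply, smul_eq_mul]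
        refine IsUltrametricDist.norm_sum_le_of_forall_le_of_nonneg hS0 fun j _ => ?_
        have : ‖e j * d j r‖ ≤ ‖e j • d j‖ := by
          rw [norm_mul, norm_smul]
          exact mul_le_mul_of_nonneg_left (norm_le_pi_norm (d j) r) (norm_nonneg _)
        exact this.trans (le_ciSup (f := fun j => ‖e j • d j‖) (Finite.bddAbove_range _) j)
      · -- lower bound via the pairing with b k
        refine ciSup_le fun k => ?_
        set y := ∑ j, e j • d j with hy
        have h1 : ‖e k‖ ≤ ‖b k‖ * ‖y‖ := by
          rw [← heval e k]; exact hpairbound k y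
        have h2 := hdnorm k
        have h3 : ‖e k • d k‖ = ‖e k‖ * ‖d k‖ := norm_smul _ _
        rw [h3]
        nlinarith [norm_nonneg (d k), norm_nonneg y, norm_nonneg (e k),
          mul_le_mul_of_nonneg_right h1 (norm_nonneg (d k)),
          mul_le_mul_of_nonneg_right h2 (norm_nonneg y), hbpos k]
  · -- the dual lattice is spanned by the dual basis
    ext y
    simp only [latticeSet, dualSet, Set.mem_setOf_eq]
    constructor
    · rintro ⟨c, rfl⟩ x ⟨a, rfl⟩
      refine ⟨∑ i, a i * c i, ?_⟩
      rw [show ((∑ i, a i * c i : ℤ_[p]) : ℚ_[p]) = ∑ i, (a i : ℚ_[p]) * (c i : ℚ_[p]) by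
        induction (Finset.univ : Finset (Fin n)) using Finset.induction with
        | empty => simp
        | insert _ _ h ih =>
            rw [Finset.sum_insert h, Finset.sum_insert h, PadicInt.coe_add,
              PadicInt.coe_mul, ih]]
      have hx : ∀ j, (∑ i, ((a i : ℚ_[p])) • b i) j = ∑ i, (a i : ℚ_[p]) * B j i := by
        intro j; simp [hbdef]
      have hy' : ∀ j, (∑ k, ((c k : ℚ_[p])) • d k) j = ∑ k, (c k : ℚ_[p]) * (B⁻¹)ᵀ j k := by
        intro j; simp [hddef]
      calc (∑ i, (a i : ℚ_[p]) * (c i : ℚ_[p]))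
          = ∑ j, (∑ i, (a i : ℚ_[p]) * B j i) * (∑ k, (c k : ℚ_[p]) * (B⁻¹)ᵀ j k) :=
            (aux_pair_sums B hB _ _).symm
        _ = ∑ j, (∑ i, ((a i : ℚ_[p])) • b i) j * (∑ k, ((c k : ℚ_[p])) • d k) j := by
            refine Finset.sum_congr rfl fun j _ => ?_
            rw [hx j, hy' j]
    · intro hy
      have hbmem : ∀ j, ∃ z : ℤ_[p],
          (z : ℚ_[p]) = ∑ r, B r j * y r := by
        intro j
        refine hy (b j) ⟨Pi.single j 1, ?_⟩
        funext r
        simp only [Finset.sum_apply, Pi.smul_apply, smul_eq_mul, Pi.single_apply]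
        rw [Finset.sum_eq_single j]
        · simp
        · intro i _ hij
          simp [hij]
        · simp
      choose z hz using hbmem
      refine ⟨z, ?_⟩
      have hspan : y = ∑ j, (∑ r, B r j * y r) • d j := aux_span B hB y
      conv_lhs => rw [hspan]
      refine Finset.sum_congr rfl fun j _ => ?_
      rw [hz j]
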